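/- For every real r with √3/2 ≤ r ≤ 1, the maximum of A(r,x) over x ∈ [0, 1/2] is strictly greater than 0.58. -/
import Mathlib


open Set

/-- `A r x = (1/2)·x·√(3 − 4x − 4x²) + (1/2)·√(r² − x²)`. -/
noncomputable def A (r x : ℝ) : ℝ :=
  1 / 2 * x * Real.sqrt (3 - 4 * x - 4 * x ^ 2) + 1 / 2 * Real.sqrt (r ^ 2 - x ^ 2)

theorem stmt_9 (r : ℝ) (hr : Real.sqrt 3 / 2 ≤ r) (hr1 : r ≤ 1) :
    0.58 < sSup (A r '' Set.Icc (0 : ℝ) (1 / 2)) := by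
  have hs3 : Real.sqrt 3 ^ 2 = 3 := Real.sq_sqrt (by norm_num)
  have hs3nn : (0:ℝ) ≤ Real.sqrt 3 := Real.sqrt_nonneg 3
  have hr0 : (0:ℝ) ≤ r := le_trans (by positivity) hr
  have hr2 : (3:ℝ)/4 ≤ r ^ 2 := by nlinarith
  have hA : (0.58 : ℝ) < A r 0.3 := by
    have h1 : Real.sqrt (3 - 4 * 0.3 - 4 * (0.3:ℝ) ^ 2) = 1.2 := by
      rw [show (3 - 4 * 0.3 - 4 * (0.3:ℝ) ^ 2) = 1.2 ^ 2 by norm_num]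
      exact Real.sqrt_sq (by norm_num)
    have h2 : (0.8 : ℝ) < Real.sqrt (r ^ 2 - 0.3 ^ 2) := by
      rw [show (0.8:ℝ) = Real.sqrt (0.8^2) from (Real.sqrt_sq (by norm_num)).symm]
      apply Real.sqrt_lt_sqrt (by norm_num)
      nlinarith
    unfold A
    rw [h1]
    nlinarith
  have hmem : A r 0.3 ∈ A r '' Set.Icc (0:ℝ) (1/2) := ⟨0.3, by constructor <;> norm_num, rfl⟩
  have hbdd : BddAbove (A r '' Set.Icc (0:ℝ) (1/2)) := by
    refine ⟨2, ?_⟩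
    rintro y ⟨x, ⟨hx0, hx1⟩, rfl⟩
    have hb1 : Real.sqrt (3 - 4 * x - 4 * x ^ 2) ≤ 2 := by
      rw [show (2:ℝ) = Real.sqrt (2^2) from (Real.sqrt_sq (by norm_num)).symm]
      apply Real.sqrt_le_sqrt; nlinarith
    have hb2 : Real.sqrt (r ^ 2 - x ^ 2) ≤ 1 := by
      rw [show (1:ℝ) = Real.sqrt (1^2) from (Real.sqrt_sq (by norm_num)).symm]
      apply Real.sqrt_le_sqrt; nlinarith
    have hnn1 : 0 ≤ Real.sqrt (3 - 4 * x - 4 * x ^ 2) := Real.sqrt_nonneg _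
    unfold A
    nlinarith
  exact lt_of_lt_of_le hA (le_csSup hbdd hmem)
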